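/- Let A ∈ ℝ^{n×n} be invertible, W ∈ ℝ^{n×n} symmetric positive definite, and let S_1, …, S_r with S_i ∈ ℝ^{n×q_i} each have full column rank, with probabilities p_i > 0, Σ_{i=1}^r p_i = 1. Set Z_i := A^T S_i (S_i^T A W A^T S_i)^{-1} S_i^T A and M := Σ_{i=1}^r p_i W^{1/2} Z_i W^{1/2}. Then the spectrum of the symmetric matrix M is contained in [0,1]; equivalently, 0 ≤ x^T M x ≤ ‖x‖₂² for all x ∈ ℝ^n. -/

import Mathlib

open Matrix BigOperators

noncomputable def Matrix.PosSemidef.sqrt {n 𝕜 : Type*} [Fintype n] [DecidableEq n] [RCLike 𝕜] [PartialOrder 𝕜] [StarOrderedRing 𝕜]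
    {A : Matrix n n 𝕜} (hA : A.PosSemidef) : Matrix n n 𝕜 :=
  hA.1.eigenvectorUnitary.1 * diagonal ((↑) ∘ (fun x => √x) ∘ hA.1.eigenvalues) *
    (star hA.1.eigenvectorUnitary : Matrix n n 𝕜)

lemma sqrt_transpose' {n : ℕ} {W : Matrix (Fin n) (Fin n) ℝ} (hW : W.PosSemidef) :
    hW.sqrtᵀ = hW.sqrt := by
  unfold Matrix.PosSemidef.sqrt
  rw [Matrix.transpose_mul, Matrix.transpose_mul, Matrix.diagonal_transpose, Matrix.mul_assoc]
  simp [Matrix.star_eq_conjTranspose, Matrix.conjTranspose_eq_transpose_of_trivial]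

lemma sqrt_mul_self' {n : ℕ} {W : Matrix (Fin n) (Fin n) ℝ} (hW : W.PosSemidef) :
    hW.sqrt * hW.sqrt = W := by
  unfold Matrix.PosSemidef.sqrt
  have hU : (star hW.1.eigenvectorUnitary : Matrix (Fin n) (Fin n) ℝ) * hW.1.eigenvectorUnitary.1 = 1 :=
    Unitary.coe_star_mul_self _
  have hD : diagonal ((RCLike.ofReal : ℝ → ℝ) ∘ (fun x => √x) ∘ hW.1.eigenvalues) *
      diagonal ((RCLike.ofReal : ℝ → ℝ) ∘ (fun x => √x) ∘ hW.1.eigenvalues) = diagonal (RCLike.ofReal ∘ hW.1.eigenvalues) := by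
    rw [Matrix.diagonal_mul_diagonal]
    congr 1; funext i
    simp [Real.mul_self_sqrt (hW.eigenvalues_nonneg i)]
  conv_rhs => rw [hW.1.spectral_theorem, Unitary.conjStarAlgAut_apply]
  calc _ = hW.1.eigenvectorUnitary.1 * diagonal ((RCLike.ofReal : ℝ → ℝ) ∘ (fun x => √x) ∘ hW.1.eigenvalues) *
      ((star hW.1.eigenvectorUnitary : Matrix (Fin n) (Fin n) ℝ) * hW.1.eigenvectorUnitary.1) *
      diagonal ((RCLike.ofReal : ℝ → ℝ) ∘ (fun x => √x) ∘ hW.1.eigenvalues) *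
      (star hW.1.eigenvectorUnitary : Matrix (Fin n) (Fin n) ℝ) := by simp only [Matrix.mul_assoc]
    _ = _ := by rw [hU, Matrix.mul_one, Matrix.mul_assoc _ (diagonal _) (diagonal _), hD]

section aux

variable {n k : ℕ}

lemma dotProduct_sum' {m r : ℕ} (x : Fin m → ℝ) (v : Fin r → Fin m → ℝ) :
    x ⬝ᵥ ∑ i, v i = ∑ i, x ⬝ᵥ v i := by
  simp only [dotProduct, Finset.sum_apply, Finset.mul_sum]
  exact Finset.sum_comm

lemma sum_mulVec' {m r : ℕ} (f : Fin r → Matrix (Fin m) (Fin m) ℝ) (x : Fin m → ℝ) :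
    (∑ i, f i) *ᵥ x = ∑ i, f i *ᵥ x :=
  map_sum (Matrix.mulVec.addMonoidHomLeft x) f Finset.univ

lemma rank_inj {S : Matrix (Fin n) (Fin k) ℝ} (hS : S.rank = k) :
    ∀ v, S.mulVec v = 0 → v = 0 := by
  intro v hv
  have h := S.mulVecLin.finrank_range_add_finrank_ker
  have hrank : Module.finrank ℝ (LinearMap.range S.mulVecLin) = S.rank := rfl
  rw [hrank, hS, Module.finrank_fin_fun] at h
  have hfr : Module.finrank ℝ (LinearMap.ker S.mulVecLin) = 0 := by omega
  have hker : LinearMap.ker S.mulVecLin = ⊥ := Submodule.finrank_eq_zero.mp hfr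
  have : v ∈ LinearMap.ker S.mulVecLin := by simpa [Matrix.mulVecLin_apply] using hv
  simpa [hker] using this

lemma gram_posDef (B : Matrix (Fin n) (Fin k) ℝ) (hB : ∀ v, B.mulVec v = 0 → v = 0) :
    (Bᵀ * B).PosDef := by
  have hps := Matrix.posSemidef_conjTranspose_mul_self B
  rw [Matrix.conjTranspose_eq_transpose_of_trivial] at hps
  refine Matrix.PosDef.of_dotProduct_mulVec_pos hps.isHermitian fun x hx => ?_
  have hBx : B.mulVec x ≠ 0 := fun h => hx (hB x h)
  have heq : star x ⬝ᵥ (Bᵀ * B) *ᵥ x = (B *ᵥ x) ⬝ᵥ (B *ᵥ x) := by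
    rw [show (star x : Fin k → ℝ) = x from rfl, ← Matrix.mulVec_mulVec,
      dotProduct_mulVec, vecMul_transpose]
  rw [heq]
  have h0 : (B *ᵥ x) ⬝ᵥ (B *ᵥ x) ≠ 0 := fun h => hBx (dotProduct_self_eq_zero.mp h)
  have h1 : 0 ≤ (B *ᵥ x) ⬝ᵥ (B *ᵥ x) :=
    Finset.sum_nonneg fun i _ => mul_self_nonneg _
  exact lt_of_le_of_ne h1 (Ne.symm h0)

lemma proj_props (B : Matrix (Fin n) (Fin k) ℝ) (hB : ∀ v, B.mulVec v = 0 → v = 0) :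
    (B * (Bᵀ * B)⁻¹ * Bᵀ)ᵀ = B * (Bᵀ * B)⁻¹ * Bᵀ ∧
    (B * (Bᵀ * B)⁻¹ * Bᵀ).PosSemidef ∧
    (1 - B * (Bᵀ * B)⁻¹ * Bᵀ).PosSemidef := by
  set G := Bᵀ * B with hGdef
  have hG : G.PosDef := gram_posDef B hB
  have hGsymm : Gᵀ = G := by
    have := hG.isHermitian
    rwa [Matrix.IsHermitian, Matrix.conjTranspose_eq_transpose_of_trivial] at this
  have hGinv : G⁻¹.PosDef := hG.inv
  have hGinvsymm : (G⁻¹)ᵀ = G⁻¹ := by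
    rw [Matrix.transpose_nonsing_inv, hGsymm]
  have hPsymm : (B * G⁻¹ * Bᵀ)ᵀ = B * G⁻¹ * Bᵀ := by
    rw [Matrix.transpose_mul, Matrix.transpose_mul, Matrix.transpose_transpose,
      hGinvsymm, Matrix.mul_assoc]
  refine ⟨hPsymm, ?_, ?_⟩
  · have := hGinv.posSemidef.mul_mul_conjTranspose_same B
    rwa [Matrix.conjTranspose_eq_transpose_of_trivial] at this
  · have hGdet : IsUnit G.det := hG.det_pos.ne'.isUnit
    have h1 : Bᵀ * (B * (G⁻¹ * Bᵀ)) = Bᵀ := by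
      rw [← Matrix.mul_assoc, ← hGdef, Matrix.mul_nonsing_inv_cancel_left _ _ hGdet]
    have hidem : (B * G⁻¹ * Bᵀ) * (B * G⁻¹ * Bᵀ) = B * G⁻¹ * Bᵀ := by
      simp only [Matrix.mul_assoc]
      rw [h1]
    have key : (1 - B * G⁻¹ * Bᵀ)ᵀ * (1 - B * G⁻¹ * Bᵀ) = 1 - B * G⁻¹ * Bᵀ := by
      simp only [Matrix.transpose_sub, Matrix.transpose_one, hPsymm, Matrix.sub_mul,
        Matrix.mul_sub, Matrix.one_mul, Matrix.mul_one, hidem]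
      abel
    have := Matrix.posSemidef_conjTranspose_mul_self (1 - B * G⁻¹ * Bᵀ)
    rwa [Matrix.conjTranspose_eq_transpose_of_trivial, key] at this

end aux

theorem stmt7 {n r : ℕ} (A W : Matrix (Fin n) (Fin n) ℝ)
    (q : Fin r → ℕ) (S : ∀ i, Matrix (Fin n) (Fin (q i)) ℝ)
    (hA : IsUnit A.det) (hW : W.PosDef) (hS : ∀ i, (S i).rank = q i)
    (p : Fin r → ℝ) (hp : ∀ i, 0 < p i) (hsum : ∑ i, p i = 1) :
    let Whalf := hW.posSemidef.sqrt
    let Z := fun i => Aᵀ * S i * ((S i)ᵀ * A * W * Aᵀ * S i)⁻¹ * (S i)ᵀ * A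
    let M := ∑ i, p i • (Whalf * Z i * Whalf)
    Mᵀ = M ∧ ∀ x : Fin n → ℝ, 0 ≤ x ⬝ᵥ M.mulVec x ∧ x ⬝ᵥ M.mulVec x ≤ x ⬝ᵥ x := by
  intro Whalf Z M
  -- Whalf facts
  have hWhs : Whalfᵀ = Whalf := by
    exact sqrt_transpose' hW.posSemidef
  have hWhsq : Whalf * Whalf = W := sqrt_mul_self' hW.posSemidef
  have hWhUnit : IsUnit Whalf.det := by
    have : Whalf.det * Whalf.det = W.det := by rw [← Matrix.det_mul, hWhsq]
    have hWdet : W.det ≠ 0 := hW.det_pos.ne'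
    exact isUnit_iff_ne_zero.mpr (fun h => hWdet (by rw [← this, h, zero_mul]))
  -- B i
  set B := fun i => Whalf * Aᵀ * S i with hBdef
  have hBinj : ∀ i, ∀ v, (B i).mulVec v = 0 → v = 0 := by
    intro i v hv
    have hAt : IsUnit (Aᵀ).det := by rwa [Matrix.det_transpose]
    rw [hBdef] at hv
    simp only [← Matrix.mulVec_mulVec] at hv
    have hWi : Function.Injective Whalf.mulVec :=
      Matrix.mulVec_injective_iff_isUnit.mpr ((Matrix.isUnit_iff_isUnit_det _).mpr hWhUnit)
    have hAi : Function.Injective (Aᵀ).mulVec :=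
      Matrix.mulVec_injective_iff_isUnit.mpr ((Matrix.isUnit_iff_isUnit_det _).mpr hAt)
    have h1 : Aᵀ *ᵥ ((S i) *ᵥ v) = 0 := by
      apply hWi; rw [Matrix.mulVec_zero]; simpa using hv
    have h2 : (S i) *ᵥ v = 0 := by
      apply hAi; rw [Matrix.mulVec_zero]; exact h1
    exact rank_inj (hS i) v h2
  -- identify terms as projections
  have hterm : ∀ i, Whalf * Z i * Whalf = B i * ((B i)ᵀ * B i)⁻¹ * (B i)ᵀ := by
    intro i
    have hBt : (B i)ᵀ = (S i)ᵀ * A * Whalf := by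
      rw [hBdef]
      simp [Matrix.transpose_mul, hWhs, Matrix.mul_assoc]
    have hGram : (B i)ᵀ * B i = (S i)ᵀ * A * W * Aᵀ * S i := by
      rw [hBt, hBdef, ← hWhsq]
      simp only [Matrix.mul_assoc]
    rw [hGram, hBt, hBdef]
    simp only [Z, Matrix.mul_assoc]
  have hP := fun i => proj_props (B i) (hBinj i)
  constructor
  · rw [show M = ∑ i, p i • (Whalf * Z i * Whalf) from rfl]
    rw [Matrix.transpose_sum]
    refine Finset.sum_congr rfl fun i _ => ?_
    rw [Matrix.transpose_smul, hterm i, (hP i).1]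
  · intro x
    have hMx : x ⬝ᵥ M *ᵥ x = ∑ i, p i * (x ⬝ᵥ (B i * ((B i)ᵀ * B i)⁻¹ * (B i)ᵀ) *ᵥ x) := by
      rw [show M = ∑ i, p i • (Whalf * Z i * Whalf) from rfl]
      rw [sum_mulVec', dotProduct_sum']
      refine Finset.sum_congr rfl fun i _ => ?_
      rw [hterm i, Matrix.smul_mulVec, dotProduct_smul, smul_eq_mul]
    constructor
    · rw [hMx]
      refine Finset.sum_nonneg fun i _ => ?_
      have := (hP i).2.1.dotProduct_mulVec_nonneg x
      exact mul_nonneg (hp i).le (by simpa using this)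
    · rw [hMx]
      calc ∑ i, p i * (x ⬝ᵥ (B i * ((B i)ᵀ * B i)⁻¹ * (B i)ᵀ) *ᵥ x)
          ≤ ∑ i, p i * (x ⬝ᵥ x) := by
            refine Finset.sum_le_sum fun i _ => ?_
            refine mul_le_mul_of_nonneg_left ?_ (hp i).le
            have h := (hP i).2.2.dotProduct_mulVec_nonneg x
            simp only [Matrix.sub_mulVec, Matrix.one_mulVec, dotProduct_sub] at h
            have : (0:ℝ) ≤ x ⬝ᵥ x - x ⬝ᵥ (B i * ((B i)ᵀ * B i)⁻¹ * (B i)ᵀ) *ᵥ x := by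
              simpa using h
            linarith
        _ = x ⬝ᵥ x := by rw [← Finset.sum_mul, hsum, one_mul]
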